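/- arXiv:2208.06648 — 6 statements merged into one kernel-verified Lean document; each statement's English description precedes it below -/
import Mathlib

section
/- Group mean imputation reconstruction error (Theorem 1, first part): L_g^{group} = ( −ρ_g · σ_{X|G} / √(α_g(1−α_g)) )² + Var(X | {O=0} ∩ G), i.e. the reconstruction error of group mean imputation in group g equals the square of the group imputation bias B_g^{group} = −ρ_g σ_{X|G}/√(α_g(1−α_g)) plus the variance of the unobserved data in group g. -/
open MeasureTheory ProbabilityTheory

/-- Covariance of two real random variables under the measure `μ`. -/
noncomputable def condCov {Ω : Type*} [MeasurableSpace Ω] (μ : Measure Ω) (O X : Ω → ℝ) : ℝ :=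
  ∫ ω, (O ω - ∫ x, O x ∂μ) * (X ω - ∫ x, X x ∂μ) ∂μ

private lemma integral_cond_eq {Ω : Type*} [MeasurableSpace Ω] (μ : Measure Ω) (s : Set Ω)
    (f : Ω → ℝ) : ∫ ω, f ω ∂(μ[|s]) = (μ s).toReal⁻¹ * ∫ ω in s, f ω ∂μ := by
  rw [ProbabilityTheory.cond, integral_smul_measure, ENNReal.toReal_inv, smul_eq_mul]

private lemma memLp_cond {Ω : Type*} [MeasurableSpace Ω] {μ : Measure Ω} {s : Set Ω}
    {f : Ω → ℝ} {p : ENNReal} (hf : MemLp f p μ) (hs : μ s ≠ 0) : MemLp f p (μ[|s]) :=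
  (hf.restrict s).smul_measure (by simp [hs])

private lemma sq_expand {Ω : Type*} [MeasurableSpace Ω] (ν : Measure Ω)
    [IsProbabilityMeasure ν] {X : Ω → ℝ} (hX : MemLp X 2 ν) (c : ℝ) :
    ∫ ω, (c - X ω) ^ 2 ∂ν = (c - ∫ x, X x ∂ν) ^ 2 + variance X ν := by
  have hXi : Integrable X ν := hX.integrable one_le_two
  have hX2i := hX.integrable_sq
  have h : ∀ ω, (c - X ω) ^ 2 = (c ^ 2 - 2 * c * X ω) + X ω ^ 2 := fun ω => by ring
  rw [variance_eq_sub hX]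
  simp_rw [h]
  have e1 : ∫ ω, ((c ^ 2 - 2 * c * X ω) + X ω ^ 2) ∂ν =
      (∫ ω, (c ^ 2 - 2 * c * X ω) ∂ν) + ∫ ω, X ω ^ 2 ∂ν :=
    integral_add ((integrable_const _).sub (hXi.const_mul _)) hX2i
  have e2 : ∫ ω, (c ^ 2 - 2 * c * X ω) ∂ν =
      (∫ _ω, (c ^ 2 : ℝ) ∂ν) - ∫ ω, 2 * c * X ω ∂ν :=
    integral_sub (integrable_const _) (hXi.const_mul _)
  rw [e1, e2, integral_const_mul, integral_const]
  simp only [measure_univ, ENNReal.toReal_one, probReal_univ, smul_eq_mul, one_mul, Pi.pow_apply]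
  ring

private lemma condCov_eq {Ω : Type*} [MeasurableSpace Ω] (ν : Measure Ω)
    [IsProbabilityMeasure ν] {O X : Ω → ℝ} (hO : Integrable O ν) (hX : Integrable X ν)
    (hOX : Integrable (fun ω => O ω * X ω) ν) :
    condCov ν O X = (∫ ω, O ω * X ω ∂ν) - (∫ ω, O ω ∂ν) * (∫ ω, X ω ∂ν) := by
  unfold condCov
  set a := ∫ ω, O ω ∂ν with ha
  set b := ∫ ω, X ω ∂ν with hb
  have h : ∀ ω, (O ω - a) * (X ω - b) = (O ω * X ω - (a * X ω + b * O ω)) + a * b :=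
    fun ω => by ring
  simp_rw [h]
  have e1 : ∫ ω, ((O ω * X ω - (a * X ω + b * O ω)) + a * b) ∂ν =
      (∫ ω, (O ω * X ω - (a * X ω + b * O ω)) ∂ν) + ∫ _ω, a * b ∂ν :=
    integral_add (hOX.sub ((hX.const_mul a).add (hO.const_mul b))) (integrable_const _)
  have e2 : ∫ ω, (O ω * X ω - (a * X ω + b * O ω)) ∂ν =
      (∫ ω, O ω * X ω ∂ν) - ∫ ω, (a * X ω + b * O ω) ∂ν :=
    integral_sub hOX ((hX.const_mul a).add (hO.const_mul b))
  have e3 : ∫ ω, (a * X ω + b * O ω) ∂ν = (∫ ω, a * X ω ∂ν) + ∫ ω, b * O ω ∂ν :=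
    integral_add (hX.const_mul a) (hO.const_mul b)
  rw [e1, e2, e3, integral_const_mul, integral_const_mul, integral_const]
  simp only [measure_univ, ENNReal.toReal_one, probReal_univ, smul_eq_mul, one_mul, ← ha, ← hb]
  ring

/-- (Theorem 1, first part.) The reconstruction error of group mean imputation
equals the square of the group imputation bias `−ρ_g σ_{X|G}/√(α_g(1−α_g))` plus the variance of
the unobserved data in group `g`. -/
theorem group_mean_imputation_error
    {Ω : Type*} [MeasurableSpace Ω] (μ : Measure Ω) [IsProbabilityMeasure μ]
    (X O : Ω → ℝ) (G : Set Ω)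
    (hXm : Measurable X) (hOm : Measurable O) (hG : MeasurableSet G)
    (hX2 : MemLp X 2 μ)
    (hO01 : ∀ ω, O ω = 0 ∨ O ω = 1)
    (αg σXG ρg μgO : ℝ)
    (hαg : αg = ∫ ω, O ω ∂(μ[|G]))
    (hσXG : σXG = Real.sqrt (variance X (μ[|G])))
    (hρg : ρg = condCov (μ[|G]) O X / (Real.sqrt (αg * (1 - αg)) * σXG))
    (hμgO : μgO = ∫ ω, X ω ∂(μ[|O ⁻¹' {1} ∩ G]))
    (hα0 : 0 < αg) (hα1 : αg < 1) (hσpos : 0 < σXG)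
    (hpos1 : 0 < μ (O ⁻¹' {1} ∩ G)) (hpos0 : 0 < μ (O ⁻¹' {0} ∩ G)) :
    (∫ ω, (μgO - X ω) ^ 2 ∂(μ[|O ⁻¹' {0} ∩ G])) =
      (-(ρg * σXG) / Real.sqrt (αg * (1 - αg))) ^ 2 +
        variance X (μ[|O ⁻¹' {0} ∩ G]) := by
  set A1 := O ⁻¹' {1} ∩ G with hA1def
  set A0 := O ⁻¹' {0} ∩ G with hA0def
  have hA1m : MeasurableSet A1 := (hOm (measurableSet_singleton 1)).inter hG
  have hA0m : MeasurableSet A0 := (hOm (measurableSet_singleton 0)).inter hG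
  have hdisj : Disjoint A1 A0 := by
    rw [Set.disjoint_left]
    rintro ω ⟨h1, -⟩ ⟨h0, -⟩
    simp only [Set.mem_preimage, Set.mem_singleton_iff] at h1 h0
    rw [h1] at h0; norm_num at h0
  have hunion : A1 ∪ A0 = G := by
    ext ω
    simp only [hA1def, hA0def, Set.mem_union, Set.mem_inter_iff, Set.mem_preimage,
      Set.mem_singleton_iff]
    rcases hO01 ω with h | h <;> simp [h] <;> tauto
  have hμG : μ G = μ A1 + μ A0 := by
    rw [← hunion, measure_union hdisj hA0m]
  have hGne : μ G ≠ 0 :=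
    (hpos1.trans_le (measure_mono (hA1def ▸ Set.inter_subset_right))).ne' 
  have hA1ne : μ A1 ≠ 0 := hpos1.ne'
  have hA0ne : μ A0 ≠ 0 := hpos0.ne'
  set m1 := (μ A1).toReal with hm1def
  set m0 := (μ A0).toReal with hm0def
  set mG := (μ G).toReal with hmGdef
  have hm1 : 0 < m1 := ENNReal.toReal_pos hA1ne (measure_ne_top μ _)
  have hm0 : 0 < m0 := ENNReal.toReal_pos hA0ne (measure_ne_top μ _)
  have hmG : mG = m1 + m0 := by
    rw [hmGdef, hμG, ENNReal.toReal_add (measure_ne_top μ _) (measure_ne_top μ _)]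
  have hmGpos : 0 < mG := by rw [hmG]; positivity
  -- probability measure instances
  haveI hP1 : IsProbabilityMeasure (μ[|A1]) := cond_isProbabilityMeasure hA1ne
  haveI hP0 : IsProbabilityMeasure (μ[|A0]) := cond_isProbabilityMeasure hA0ne
  haveI hPG : IsProbabilityMeasure (μ[|G]) := cond_isProbabilityMeasure hGne
  -- integrabilities
  have hXint : Integrable X μ := hX2.integrable one_le_two
  have hOint : Integrable O μ := by
    refine (integrable_const (1 : ℝ)).mono' hOm.aestronglyMeasurable (ae_of_all _ fun ω => ?_)
    rcases hO01 ω with h | h <;> simp [h]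
  have hOXint : Integrable (fun ω => O ω * X ω) μ := by
    refine hXint.norm.mono' (hOm.mul hXm).aestronglyMeasurable (ae_of_all _ fun ω => ?_)
    rcases hO01 ω with h | h
    · simp only [h, zero_mul, norm_zero]; exact norm_nonneg (X ω)
    · simp [h]
  -- integrals over A1, A0
  set I1 := ∫ ω in A1, X ω ∂μ with hI1def
  set I0 := ∫ ω in A0, X ω ∂μ with hI0def
  have hO_A1 : ∫ ω in A1, O ω ∂μ = m1 := by
    rw [setIntegral_congr_fun hA1m (g := fun _ => (1 : ℝ)) fun ω hω => hω.1, setIntegral_const]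
    simp [Measure.real, hm1def]
  have hO_A0 : ∫ ω in A0, O ω ∂μ = 0 := by
    rw [setIntegral_congr_fun hA0m (g := fun _ => (0 : ℝ)) fun ω hω => hω.1]
    simp
  have hOX_A1 : ∫ ω in A1, O ω * X ω ∂μ = I1 := by
    refine setIntegral_congr_fun hA1m fun ω hω => ?_
    have : O ω = 1 := hω.1
    simp [this]
  have hOX_A0 : ∫ ω in A0, O ω * X ω ∂μ = 0 := by
    rw [setIntegral_congr_fun hA0m (g := fun _ => (0 : ℝ)) fun ω hω => by
      have : O ω = 0 := hω.1
      simp [this]]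
    simp
  have hsplit : ∀ (f : Ω → ℝ), Integrable f μ →
      ∫ ω in G, f ω ∂μ = (∫ ω in A1, f ω ∂μ) + ∫ ω in A0, f ω ∂μ := by
    intro f hf
    rw [← hunion, setIntegral_union hdisj hA0m hf.integrableOn hf.integrableOn]
  -- key scalar identities
  have hαg' : αg = m1 / mG := by
    rw [hαg, integral_cond_eq, hsplit O hOint, hO_A1, hO_A0]
    rw [← hmGdef]; ring
  have hμ1 : μgO = I1 / m1 := by
    rw [hμgO, integral_cond_eq, ← hm1def, ← hI1def]; ring
  set μ0 := ∫ ω, X ω ∂(μ[|A0]) with hμ0def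
  have hμ0 : μ0 = I0 / m0 := by
    rw [hμ0def, integral_cond_eq, ← hm0def, ← hI0def]; ring
  have hEX_G : ∫ ω, X ω ∂(μ[|G]) = (I1 + I0) / mG := by
    rw [integral_cond_eq, hsplit X hXint, ← hmGdef, ← hI1def, ← hI0def]; ring
  have hEOX_G : ∫ ω, (fun ω => O ω * X ω) ω ∂(μ[|G]) = I1 / mG := by
    rw [integral_cond_eq, hsplit _ hOXint, hOX_A1, hOX_A0, ← hmGdef]
    ring
  have hcc : condCov (μ[|G]) O X = I1 / mG - (m1 / mG) * ((I1 + I0) / mG) := by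
    rw [condCov_eq (μ[|G]) (hOint.restrict.smul_measure (by simp [hGne]))
      (hXint.restrict.smul_measure (by simp [hGne]))
      (hOXint.restrict.smul_measure (by simp [hGne]))]
    rw [hEOX_G, ← hαg, hEX_G, hαg']
  -- 1 - αg
  have h1α : 1 - αg = m0 / mG := by
    rw [hαg', hmG]; field_simp; ring
  have hppos : 0 < αg * (1 - αg) := mul_pos hα0 (by linarith)
  have hsq : Real.sqrt (αg * (1 - αg)) > 0 := Real.sqrt_pos.mpr hppos
  -- bias identity
  have hB : -(ρg * σXG) / Real.sqrt (αg * (1 - αg)) = μ0 - μgO := by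
    set s := Real.sqrt (αg * (1 - αg)) with hsdef
    have hs : s ≠ 0 := hsq.ne'
    have hss : s * s = αg * (1 - αg) := Real.mul_self_sqrt hppos.le
    rw [hρg]
    have h1 : condCov (μ[|G]) O X / (s * σXG) * σXG =
        condCov (μ[|G]) O X / s := by
      field_simp
    rw [h1, neg_div, div_div, hss, hcc, hμ0, hμ1, h1α, hαg', hmG]
    have hm1' : m1 ≠ 0 := hm1.ne'
    have hm0' : m0 ≠ 0 := hm0.ne'
    have hmG' : m1 + m0 ≠ 0 := by positivity
    field_simp
    ring
  -- conclude
  have hX2cond : MemLp X 2 (μ[|A0]) := memLp_cond hX2 hA0ne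
  rw [sq_expand (μ[|A0]) hX2cond μgO, ← hμ0def, hB]
  ring
end

section
/- Population mean imputation reconstruction error (Theorem 1, second part): L_g^{pop} = ( B_g^{group} + μ_g^O − μ^O )² + Var(X | {O=0} ∩ G), where B_g^{group} = E[X | {O=0} ∩ G] − μ_g^O = −ρ_g σ_{X|G}/√(α_g(1−α_g)); i.e. the population mean reconstruction error in group g equals the square of the group imputation bias shifted by the difference between the group-observed and population-observed means, plus the variance of the unobserved data in group g. -/
open MeasureTheory ProbabilityTheory

private lemma memLp_cond_aux {Ω : Type*} [MeasurableSpace Ω] {μ : Measure Ω} {X : Ω → ℝ}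
    {p : ENNReal} (hX : MemLp X p μ) (s : Set Ω) (hs : μ s ≠ 0) : MemLp X p (μ[|s]) := by
  rw [ProbabilityTheory.cond]
  exact (hX.restrict s).smul_measure (ENNReal.inv_ne_top.mpr hs)

private lemma integral_cond_aux {Ω : Type*} [MeasurableSpace Ω] (μ : Measure Ω) (f : Ω → ℝ)
    (s : Set Ω) : ∫ ω, f ω ∂(μ[|s]) = (μ s).toReal⁻¹ * ∫ ω in s, f ω ∂μ := by
  rw [ProbabilityTheory.cond, integral_smul_measure, ENNReal.toReal_inv, smul_eq_mul]

private lemma integral_sq_sub_aux {Ω : Type*} [MeasurableSpace Ω] (P : Measure Ω)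
    [IsProbabilityMeasure P] {X : Ω → ℝ} (hX : MemLp X 2 P) (c : ℝ) :
    ∫ ω, (c - X ω) ^ 2 ∂P = (c - ∫ ω, X ω ∂P) ^ 2 + variance X P := by
  have hXi : Integrable X P := hX.integrable one_le_two
  have hX2i : Integrable (fun ω => X ω ^ 2) P := hX.integrable_sq
  have h : ∀ ω, (c - X ω) ^ 2 = X ω ^ 2 - (2 * c) * X ω + c ^ 2 := fun ω => by ring
  simp_rw [h]
  have h1 : Integrable (fun ω => X ω ^ 2 - 2 * c * X ω) P := hX2i.sub (hXi.const_mul _)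
  rw [integral_add h1 (integrable_const _),
      integral_sub hX2i (hXi.const_mul _), integral_const_mul, integral_const,
      variance_eq_sub hX]
  simp only [probReal_univ, measure_univ, ENNReal.toReal_one, one_smul, Pi.pow_apply]
  ring

/-- (Theorem 1, second part.) The reconstruction error of population mean
imputation in group `g` equals `(B_g^group + μ_g^O − μ^O)²` plus the variance of the unobserved
data in group `g`, where `B_g^group = E[X | {O=0} ∩ G] − μ_g^O = −ρ_g σ_{X|G}/√(α_g(1−α_g))`. -/
theorem population_mean_imputation_error
    {Ω : Type*} [MeasurableSpace Ω] (μ : Measure Ω) [IsProbabilityMeasure μ]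
    (X O : Ω → ℝ) (G : Set Ω)
    (hXm : Measurable X) (hOm : Measurable O) (hG : MeasurableSet G)
    (hX2 : MemLp X 2 μ)
    (hO01 : ∀ ω, O ω = 0 ∨ O ω = 1)
    (αg σXG ρg μgO μO BgGroup : ℝ)
    (hαg : αg = ∫ ω, O ω ∂(μ[|G]))
    (hσXG : σXG = Real.sqrt (variance X (μ[|G])))
    (hρg : ρg = condCov (μ[|G]) O X / (Real.sqrt (αg * (1 - αg)) * σXG))
    (hμgO : μgO = ∫ ω, X ω ∂(μ[|O ⁻¹' {1} ∩ G]))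
    (hμO : μO = ∫ ω, X ω ∂(μ[|O ⁻¹' {1}]))
    (hBg : BgGroup = (∫ ω, X ω ∂(μ[|O ⁻¹' {0} ∩ G])) - μgO)
    (hα0 : 0 < αg) (hα1 : αg < 1) (hσpos : 0 < σXG)
    (hpos1 : 0 < μ (O ⁻¹' {1} ∩ G)) (hpos0 : 0 < μ (O ⁻¹' {0} ∩ G))
    (hpos1' : 0 < μ (O ⁻¹' {1})) :
    (∫ ω, (μO - X ω) ^ 2 ∂(μ[|O ⁻¹' {0} ∩ G])) =
        (BgGroup + μgO - μO) ^ 2 + variance X (μ[|O ⁻¹' {0} ∩ G]) ∧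
    BgGroup = -(ρg * σXG) / Real.sqrt (αg * (1 - αg)) := by
  have hSm : MeasurableSet (O ⁻¹' {1}) := hOm (measurableSet_singleton 1)
  have hG0 : μ G ≠ 0 := (hpos1.trans_le (measure_mono Set.inter_subset_right)).ne'
  haveI : IsProbabilityMeasure (μ[|G]) := cond_isProbabilityMeasure hG0
  set ν := μ[|G] with hν
  set S := O ⁻¹' {1} with hSdef
  have hSc : O ⁻¹' {0} = Sᶜ := by
    ext ω
    rcases hO01 ω with h | h <;> simp [hSdef, h]
  -- Membership facts and integrability under ν
  have hXν : MemLp X 2 ν := memLp_cond_aux hX2 G hG0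
  have hXνi : Integrable X ν := hXν.integrable one_le_two
  have hOind : O = S.indicator (1 : Ω → ℝ) := by
    funext ω
    rcases hO01 ω with h | h <;> simp [hSdef, Set.indicator_apply, h]
  have hOXind : (fun ω => O ω * X ω) = S.indicator X := by
    funext ω
    rcases hO01 ω with h | h <;> simp [hSdef, Set.indicator_apply, h]
  have hOνi : Integrable O ν := by
    rw [hOind]; exact (integrable_const 1).indicator hSm
  have hOXνi : Integrable (fun ω => O ω * X ω) ν := by
    rw [hOXind]; exact hXνi.indicator hSm
  -- αg = ν S
  have hνS : (ν S).toReal = αg := by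
    rw [hαg, hOind, integral_indicator_one hSm, Measure.real]
  have hνSc : (ν Sᶜ).toReal = 1 - αg := by
    rw [prob_compl_eq_one_sub hSm, ENNReal.toReal_sub_of_le prob_le_one ENNReal.one_ne_top,
      ENNReal.toReal_one, hνS]
  -- conditional measures
  have hcond1 : ν[|S] = μ[|S ∩ G] := by
    rw [hν, cond_cond_eq_cond_inter hG hSm, Set.inter_comm]
  have hcond0 : ν[|Sᶜ] = μ[|Sᶜ ∩ G] := by
    rw [hν, cond_cond_eq_cond_inter hG hSm.compl, Set.inter_comm]
  have hνS0 : (ν S).toReal ≠ 0 := by rw [hνS]; exact hα0.ne'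
  have hνSc0 : (ν Sᶜ).toReal ≠ 0 := by rw [hνSc]; exact (sub_pos.mpr hα1).ne'
  set m0 : ℝ := ∫ ω, X ω ∂(μ[|Sᶜ ∩ G]) with hm0
  -- set integral over S
  have hintS : ∫ ω in S, X ω ∂ν = αg * μgO := by
    have := integral_cond_aux ν X S
    rw [hcond1, ← hμgO] at this
    rw [← hνS]
    field_simp at this ⊢
    linarith [this]
  have hintSc : ∫ ω in Sᶜ, X ω ∂ν = (1 - αg) * m0 := by
    have := integral_cond_aux ν X Sᶜ
    rw [hcond0, ← hm0] at this
    rw [← hνSc]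
    field_simp at this ⊢
    linarith [this]
  -- mean of X under ν
  have hmean : ∫ ω, X ω ∂ν = αg * μgO + (1 - αg) * m0 := by
    rw [← integral_add_compl hSm hXνi, hintS, hintSc]
  -- ∫ O X = ∫_S X
  have hOXint : ∫ ω, O ω * X ω ∂ν = αg * μgO := by
    rw [hOXind, integral_indicator hSm, hintS]
  -- covariance expansion
  have hcov : condCov ν O X = αg * (1 - αg) * (μgO - m0) := by
    have ha : ∫ x, O x ∂ν = αg := hαg.symm
    have hexp : ∀ ω, (O ω - ∫ x, O x ∂ν) * (X ω - ∫ x, X x ∂ν) =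
        O ω * X ω - (∫ x, X x ∂ν) * O ω - (∫ x, O x ∂ν) * X ω
          + (∫ x, O x ∂ν) * (∫ x, X x ∂ν) := fun ω => by ring
    have h2 : Integrable (fun ω => O ω * X ω - (∫ x, X x ∂ν) * O ω) ν :=
      hOXνi.sub (hOνi.const_mul _)
    have h3 : Integrable
        (fun ω => O ω * X ω - (∫ x, X x ∂ν) * O ω - (∫ x, O x ∂ν) * X ω) ν :=
      h2.sub (hXνi.const_mul _)
    rw [condCov]
    simp_rw [hexp]
    rw [integral_add h3 (integrable_const _),
      integral_sub h2 (hXνi.const_mul _),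
      integral_sub hOXνi (hOνi.const_mul _), integral_const_mul, integral_const_mul,
      integral_const, hOXint, ha, hmean]
    simp only [probReal_univ, measure_univ, ENNReal.toReal_one, one_smul]
    ring
  -- second claim
  have hq : (0:ℝ) < αg * (1 - αg) := mul_pos hα0 (sub_pos.mpr hα1)
  have hsq : Real.sqrt (αg * (1 - αg)) * Real.sqrt (αg * (1 - αg)) = αg * (1 - αg) :=
    Real.mul_self_sqrt hq.le
  have hsqpos : (0:ℝ) < Real.sqrt (αg * (1 - αg)) := Real.sqrt_pos.mpr hq
  have hB : BgGroup = -(ρg * σXG) / Real.sqrt (αg * (1 - αg)) := by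
    have h1 : ρg * σXG = condCov ν O X / Real.sqrt (αg * (1 - αg)) := by
      rw [hρg, div_mul_eq_mul_div, mul_comm (Real.sqrt (αg * (1 - αg))) σXG, ← div_div,
        mul_div_assoc, div_self hσpos.ne', mul_one]
    rw [hSc] at hBg
    rw [hBg, ← hm0, h1, hcov, neg_div, div_div, hsq,
      mul_div_cancel_left₀ _ hq.ne']
    ring
  refine ⟨?_, hB⟩
  -- first claim
  have h0 : μ (Sᶜ ∩ G) ≠ 0 := by rw [← hSc]; exact hpos0.ne'
  haveI : IsProbabilityMeasure (μ[|Sᶜ ∩ G]) := cond_isProbabilityMeasure h0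
  have hXν0 : MemLp X 2 (μ[|Sᶜ ∩ G]) := memLp_cond_aux hX2 _ h0
  have key := integral_sq_sub_aux (μ[|Sᶜ ∩ G]) hXν0 μO
  rw [hSc, key, ← hm0, hBg, hSc, ← hm0]
  ring
end

section
/- The deviation of the observed group mean from the true group mean satisfies μ_g^O − μ_g = Cov(O, X | G)/α_g = ρ_g · √((1−α_g)/α_g) · σ_{X|G}. -/
open MeasureTheory ProbabilityTheory Set

lemma condCov_expand {Ω : Type*} [MeasurableSpace Ω] (ν : Measure Ω) [IsProbabilityMeasure ν]
    (O X : Ω → ℝ) (hO : Integrable O ν) (hX : Integrable X ν)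
    (hOX : Integrable (fun ω => O ω * X ω) ν) :
    condCov ν O X = (∫ ω, O ω * X ω ∂ν) - (∫ ω, O ω ∂ν) * (∫ ω, X ω ∂ν) := by
  set a := ∫ ω, O ω ∂ν
  set b := ∫ ω, X ω ∂ν
  have h1 : ∀ ω, (O ω - a) * (X ω - b) = O ω * X ω - a * X ω - b * O ω + a * b := by
    intro ω; ring
  unfold condCov
  show ∫ ω, (O ω - a) * (X ω - b) ∂ν = _
  simp_rw [h1]
  have hI1 : Integrable (fun ω => O ω * X ω - a * X ω) ν := hOX.sub (hX.const_mul a)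
  have hI2 : Integrable (fun ω => O ω * X ω - a * X ω - b * O ω) ν := hI1.sub (hO.const_mul b)
  rw [integral_add hI2 (integrable_const _), integral_sub hI1 (hO.const_mul b),
    integral_sub hOX (hX.const_mul a), integral_const, integral_const_mul, integral_const_mul]
  simp [measure_univ]
  ring

/-- The deviation of the observed group mean from the true group mean:
`μ_g^O − μ_g = Cov(O, X | G)/α_g = ρ_g √((1−α_g)/α_g) σ_{X|G}`. -/
theorem observed_group_mean_deviation
    {Ω : Type*} [MeasurableSpace Ω] (μ : Measure Ω) [IsProbabilityMeasure μ]
    (X O : Ω → ℝ) (G : Set Ω)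
    (hXm : Measurable X) (hOm : Measurable O) (hG : MeasurableSet G)
    (hX2 : MemLp X 2 μ)
    (hO01 : ∀ ω, O ω = 0 ∨ O ω = 1)
    (αg σXG ρg μg μgO : ℝ)
    (hαg : αg = ∫ ω, O ω ∂(μ[|G]))
    (hμg : μg = ∫ ω, X ω ∂(μ[|G]))
    (hμgO : μgO = ∫ ω, X ω ∂(μ[|O ⁻¹' {1} ∩ G]))
    (hσXG : σXG = Real.sqrt (variance X (μ[|G])))
    (hρg : ρg = condCov (μ[|G]) O X / (Real.sqrt (αg * (1 - αg)) * σXG))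
    (hα0 : 0 < αg) (hα1 : αg < 1) (hσpos : 0 < σXG)
    (hpos1 : 0 < μ (O ⁻¹' {1} ∩ G)) :
    μgO - μg = condCov (μ[|G]) O X / αg ∧
    μgO - μg = ρg * Real.sqrt ((1 - αg) / αg) * σXG := by
  classical
  set S : Set Ω := O ⁻¹' {1} with hSdef
  have hSm : MeasurableSet S := hOm (measurableSet_singleton 1)
  have hSG0 : μ (S ∩ G) ≠ 0 := hpos1.ne'
  have hG0 : μ G ≠ 0 := fun h =>
    hSG0 (le_antisymm ((measure_mono Set.inter_subset_right).trans_eq h) zero_le)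
  haveI : IsProbabilityMeasure (μ[|G]) := cond_isProbabilityMeasure hG0
  have hOeq : O = S.indicator (fun _ => (1:ℝ)) := by
    funext ω
    rcases hO01 ω with h | h
    · have hω : ω ∉ S := by simp [hSdef, h]
      simp [h, Set.indicator_of_notMem hω]
    · have hω : ω ∈ S := by simp [hSdef, h]
      simp [h, Set.indicator_of_mem hω]
  have hOXeq : (fun ω => O ω * X ω) = S.indicator X := by
    funext ω
    rcases hO01 ω with h | h
    · have hω : ω ∉ S := by simp [hSdef, h]
      simp [h, Set.indicator_of_notMem hω]
    · have hω : ω ∈ S := by simp [hSdef, h]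
      simp [h, Set.indicator_of_mem hω]
  have hXν : Integrable X (μ[|G]) := by
    rw [ProbabilityTheory.cond]
    exact ((hX2.integrable one_le_two).restrict).smul_measure (ENNReal.inv_ne_top.2 hG0)
  have hOν : Integrable O (μ[|G]) := by
    rw [hOeq]
    exact (integrable_const (1:ℝ)).indicator hSm
  have hOXν : Integrable (fun ω => O ω * X ω) (μ[|G]) := by
    rw [hOXeq]; exact hXν.indicator hSm
  -- real quantities
  set A : ℝ := (μ (S ∩ G)).toReal with hA
  set B : ℝ := (μ G).toReal with hB
  set I : ℝ := ∫ x in S ∩ G, X x ∂μ with hI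
  have hApos : 0 < A := ENNReal.toReal_pos hSG0 (measure_ne_top μ _)
  have hBpos : 0 < B := ENNReal.toReal_pos hG0 (measure_ne_top μ _)
  -- αg = A / B
  have hαg' : αg = A / B := by
    rw [hαg, hOeq, integral_indicator_const _ hSm, measureReal_def, cond_apply hG, Set.inter_comm G S]
    simp [ENNReal.toReal_mul, ENNReal.toReal_inv, hA, hB, div_eq_inv_mul]
  -- restrict of cond
  have hrestr : (μ[|G]).restrict S = (μ G)⁻¹ • μ.restrict (S ∩ G) := by
    rw [ProbabilityTheory.cond, Measure.restrict_smul, Measure.restrict_restrict hSm]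
  -- ∫ O X dν = B⁻¹ * I
  have hOXint : ∫ ω, O ω * X ω ∂(μ[|G]) = B⁻¹ * I := by
    rw [hOXeq, integral_indicator hSm, hrestr, integral_smul_measure]
    simp [ENNReal.toReal_inv, hB, hI, smul_eq_mul]
  -- μgO = A⁻¹ * I
  have hμgO' : μgO = A⁻¹ * I := by
    rw [hμgO, ProbabilityTheory.cond, integral_smul_measure]
    simp [ENNReal.toReal_inv, hA, hI, smul_eq_mul, hSdef]
  have hcov : condCov (μ[|G]) O X = B⁻¹ * I - αg * μg := by
    rw [condCov_expand _ O X hOν hXν hOXν, hOXint, ← hαg, ← hμg]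
  have hfirst : μgO - μg = condCov (μ[|G]) O X / αg := by
    rw [hcov, hμgO', hαg']
    field_simp
  refine ⟨hfirst, ?_⟩
  rw [hfirst, hρg]
  set C := condCov (μ[|G]) O X
  have h1α : 0 < 1 - αg := by linarith
  have hsa : Real.sqrt αg > 0 := Real.sqrt_pos.2 hα0
  have hsb : Real.sqrt (1 - αg) > 0 := Real.sqrt_pos.2 h1α
  rw [Real.sqrt_mul hα0.le, Real.sqrt_div h1α.le]
  have hsa2 : Real.sqrt αg * Real.sqrt αg = αg := Real.mul_self_sqrt hα0.le
  field_simp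
  linear_combination C * hsa2
end

section
/- The deviation of the unobserved group mean from the true group mean satisfies E[X | {O=0} ∩ G] − μ_g = −Cov(O, X | G)/(1−α_g) = −ρ_g · √(α_g/(1−α_g)) · σ_{X|G}. -/
open MeasureTheory ProbabilityTheory

/-- The deviation of the unobserved group mean from the true group mean:
`E[X | {O=0} ∩ G] − μ_g = −Cov(O, X | G)/(1−α_g) = −ρ_g √(α_g/(1−α_g)) σ_{X|G}`. -/
theorem unobserved_group_mean_deviation
    {Ω : Type*} [MeasurableSpace Ω] (μ : Measure Ω) [IsProbabilityMeasure μ]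
    (X O : Ω → ℝ) (G : Set Ω)
    (hXm : Measurable X) (hOm : Measurable O) (hG : MeasurableSet G)
    (hX2 : MemLp X 2 μ)
    (hO01 : ∀ ω, O ω = 0 ∨ O ω = 1)
    (αg σXG ρg μg : ℝ)
    (hαg : αg = ∫ ω, O ω ∂(μ[|G]))
    (hμg : μg = ∫ ω, X ω ∂(μ[|G]))
    (hσXG : σXG = Real.sqrt (variance X (μ[|G])))
    (hρg : ρg = condCov (μ[|G]) O X / (Real.sqrt (αg * (1 - αg)) * σXG))
    (hα0 : 0 < αg) (hα1 : αg < 1) (hσpos : 0 < σXG)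
    (hpos0 : 0 < μ (O ⁻¹' {0} ∩ G)) :
    (∫ ω, X ω ∂(μ[|O ⁻¹' {0} ∩ G])) - μg = -(condCov (μ[|G]) O X) / (1 - αg) ∧
    (∫ ω, X ω ∂(μ[|O ⁻¹' {0} ∩ G])) - μg = -(ρg * Real.sqrt (αg / (1 - αg)) * σXG) := by
  set T : Set Ω := O ⁻¹' {0} with hT
  have hTmeas : MeasurableSet T := hOm (measurableSet_singleton 0)
  have hGne : μ G ≠ 0 := by
    intro h
    exact absurd (measure_mono_null Set.inter_subset_right h) hpos0.ne'
  set ν := μ[|G] with hν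
  haveI hνprob : IsProbabilityMeasure ν := cond_isProbabilityMeasure hGne
  -- integrability facts
  have hXν2 : MemLp X 2 ν := by
    rw [hν, ProbabilityTheory.cond]
    exact (hX2.restrict G).smul_measure (by simp [hGne])
  have hXint : Integrable X ν := hXν2.integrable (by norm_num)
  have hOint : Integrable O ν :=
    (integrable_const (1 : ℝ)).mono' hOm.aestronglyMeasurable
      (Filter.Eventually.of_forall fun ω => by rcases hO01 ω with h | h <;> simp [h])
  have hOXint : Integrable (fun ω => O ω * X ω) ν :=
    hXint.abs.mono' (hOm.mul hXm).aestronglyMeasurable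
      (Filter.Eventually.of_forall fun ω => by
        rcases hO01 ω with h | h <;> simp [h, abs_nonneg])
  -- covariance identity
  have hcov : condCov ν O X = (∫ ω, O ω * X ω ∂ν) - αg * μg := by
    have : (fun ω => (O ω - ∫ x, O x ∂ν) * (X ω - ∫ x, X x ∂ν)) =
        fun ω => O ω * X ω - αg * X ω - μg * O ω + αg * μg := by
      funext ω; rw [← hαg, ← hμg]; ring
    have i2 : Integrable (fun ω => O ω * X ω - αg * X ω) ν := by
      exact hOXint.sub (hXint.const_mul αg)
    have i1 : Integrable (fun ω => O ω * X ω - αg * X ω - μg * O ω) ν := by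
      exact i2.sub (hOint.const_mul μg)
    rw [condCov, this]
    rw [integral_add i1 (integrable_const _),
      integral_sub i2 (hOint.const_mul μg),
      integral_sub hOXint (hXint.const_mul αg), integral_const_mul, integral_const_mul,
      integral_const, ← hαg, ← hμg]
    simp; ring
  -- measure of T under ν
  have hTν : (ν T).toReal = 1 - αg := by
    have h1 : ∫ ω, T.indicator (fun _ => (1 : ℝ)) ω ∂ν = (ν T).toReal := by
      rw [integral_indicator_const _ hTmeas]; simp [measureReal_def]
    have h2 : T.indicator (fun _ => (1 : ℝ)) = fun ω => 1 - O ω := by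
      funext ω
      rcases hO01 ω with h | h <;>
        simp [Set.indicator, hT, Set.mem_preimage, h]
    rw [h2] at h1
    rw [integral_sub (integrable_const _) hOint, integral_const, ← hαg] at h1
    simp at h1
    linarith [h1]
  have hTνne : ν T ≠ 0 := by
    intro h
    rw [h] at hTν
    simp at hTν
    linarith
  -- restricted integral
  have hrestr : ∫ ω in T, X ω ∂ν = μg - ∫ ω, O ω * X ω ∂ν := by
    rw [← integral_indicator hTmeas]
    have h2 : T.indicator X = fun ω => X ω - O ω * X ω := by
      funext ω
      rcases hO01 ω with h | h <;>
        simp [Set.indicator, hT, Set.mem_preimage, h]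
    rw [h2, integral_sub hXint hOXint, ← hμg]
  -- main integral computation
  have hcond : μ[|T ∩ G] = ν[|T] := by
    rw [hν, cond_cond_eq_cond_inter hG hTmeas μ, Set.inter_comm]
  have hint : (∫ ω, X ω ∂(μ[|T ∩ G])) = (1 - αg)⁻¹ * (μg - ∫ ω, O ω * X ω ∂ν) := by
    rw [hcond, ProbabilityTheory.cond, integral_smul_measure, ENNReal.toReal_inv, hTν, hrestr]
    simp [smul_eq_mul]
  have hb : (0 : ℝ) < 1 - αg := by linarith
  have key : (∫ ω, X ω ∂(μ[|T ∩ G])) - μg = -(condCov ν O X) / (1 - αg) := by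
    rw [hint, hcov]
    field_simp
    ring
  refine ⟨key, ?_⟩
  rw [key, hρg]
  have hsa : Real.sqrt αg ≠ 0 := by positivity
  have hsb : Real.sqrt (1 - αg) ≠ 0 := by positivity
  rw [Real.sqrt_mul hα0.le, Real.sqrt_div hα0.le]
  have hbb : Real.sqrt (1 - αg) * Real.sqrt (1 - αg) = 1 - αg :=
    Real.mul_self_sqrt hb.le
  field_simp
  rw [← hbb]
  ring_nf
  rw [Real.sqrt_sq (Real.sqrt_nonneg (1 - αg))]
end

section
/- Factorized characterization of the gap comparison (intermediate step of Theorem 3): under the assumption Var(X | {O=0} ∩ G) = Var(X | {O=0} ∩ Gᶜ), the group-imputation gap exceeds the population-imputation gap, Δ^{group}_g > Δ^{pop}_g, if and only if (μ_{¬g}^O − μ^O)·(B_{¬g}^{pop} + B_{¬g}^{group}) > (μ_g^O − μ^O)·(B_g^{pop} + B_g^{group}). -/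
open MeasureTheory ProbabilityTheory

lemma sq_int_eq_var_add {Ω : Type*} [MeasurableSpace Ω] (m : Measure Ω)
    [IsProbabilityMeasure m] (X : Ω → ℝ) (hX : MemLp X 2 m) (c : ℝ) :
    ∫ ω, (c - X ω) ^ 2 ∂m = variance X m + ((∫ ω, X ω ∂m) - c) ^ 2 := by
  have hX1 : Integrable X m := hX.integrable (by norm_num)
  have hXsq : Integrable (fun ω => X ω ^ 2) m := hX.integrable_sq
  have h : ∫ ω, (c - X ω) ^ 2 ∂m
      = ∫ ω, (c ^ 2 - 2 * c * X ω + X ω ^ 2) ∂m := by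
    congr 1; ext ω; ring
  rw [h, integral_add (by exact (integrable_const _).sub (hX1.const_mul _)) hXsq,
    integral_sub (integrable_const _) (hX1.const_mul _), integral_const,
    integral_const_mul, variance_eq_sub hX]
  simp [measure_univ]
  ring
/-- Factorized characterization of the gap comparison: under equal
unobserved-data variances, `Δ^group_g > Δ^pop_g` iff
`(μ_{¬g}^O − μ^O)(B_{¬g}^pop + B_{¬g}^group) > (μ_g^O − μ^O)(B_g^pop + B_g^group)`. -/
theorem gap_comparison_factorized
    {Ω : Type*} [MeasurableSpace Ω] (μ : Measure Ω) [IsProbabilityMeasure μ]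
    (X O : Ω → ℝ) (G : Set Ω)
    (hXm : Measurable X) (hOm : Measurable O) (hG : MeasurableSet G)
    (hX2 : MemLp X 2 μ)
    (hO01 : ∀ ω, O ω = 0 ∨ O ω = 1)
    (μgO μngO μO LgGroup LngGroup LgPop LngPop
      BgGroup BngGroup BgPop BngPop ΔGroup ΔPop : ℝ)
    (hμgO : μgO = ∫ ω, X ω ∂(μ[|O ⁻¹' {1} ∩ G]))
    (hμngO : μngO = ∫ ω, X ω ∂(μ[|O ⁻¹' {1} ∩ Gᶜ]))
    (hμO : μO = ∫ ω, X ω ∂(μ[|O ⁻¹' {1}]))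
    (hLgGroup : LgGroup = ∫ ω, (μgO - X ω) ^ 2 ∂(μ[|O ⁻¹' {0} ∩ G]))
    (hLngGroup : LngGroup = ∫ ω, (μngO - X ω) ^ 2 ∂(μ[|O ⁻¹' {0} ∩ Gᶜ]))
    (hLgPop : LgPop = ∫ ω, (μO - X ω) ^ 2 ∂(μ[|O ⁻¹' {0} ∩ G]))
    (hLngPop : LngPop = ∫ ω, (μO - X ω) ^ 2 ∂(μ[|O ⁻¹' {0} ∩ Gᶜ]))
    (hBgGroup : BgGroup = (∫ ω, X ω ∂(μ[|O ⁻¹' {0} ∩ G])) - μgO)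
    (hBngGroup : BngGroup = (∫ ω, X ω ∂(μ[|O ⁻¹' {0} ∩ Gᶜ])) - μngO)
    (hBgPop : BgPop = (∫ ω, X ω ∂(μ[|O ⁻¹' {0} ∩ G])) - μO)
    (hBngPop : BngPop = (∫ ω, X ω ∂(μ[|O ⁻¹' {0} ∩ Gᶜ])) - μO)
    (hΔGroup : ΔGroup = LgGroup - LngGroup)
    (hΔPop : ΔPop = LgPop - LngPop)
    (hpos1g : 0 < μ (O ⁻¹' {1} ∩ G)) (hpos0g : 0 < μ (O ⁻¹' {0} ∩ G))
    (hpos1ng : 0 < μ (O ⁻¹' {1} ∩ Gᶜ)) (hpos0ng : 0 < μ (O ⁻¹' {0} ∩ Gᶜ))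
    (hpos1 : 0 < μ (O ⁻¹' {1}))
    (hvar : variance X (μ[|O ⁻¹' {0} ∩ G]) = variance X (μ[|O ⁻¹' {0} ∩ Gᶜ])) :
    ΔGroup > ΔPop ↔
      (μngO - μO) * (BngPop + BngGroup) > (μgO - μO) * (BgPop + BgGroup) := by
  have hmemcond : ∀ s : Set Ω, μ s ≠ 0 → MemLp X 2 (μ[|s]) := fun s hs => by
    unfold ProbabilityTheory.cond
    exact (hX2.restrict s).smul_measure (ENNReal.inv_ne_top.2 hs)
  have hprob : ∀ s : Set Ω, 0 < μ s → IsProbabilityMeasure (μ[|s]) := fun s hs =>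
    cond_isProbabilityMeasure hs.ne'
  have hPg := hprob _ hpos0g
  have hPng := hprob _ hpos0ng
  have e1 := sq_int_eq_var_add (μ[|O ⁻¹' {0} ∩ G]) X (hmemcond _ hpos0g.ne') μgO
  have e2 := sq_int_eq_var_add (μ[|O ⁻¹' {0} ∩ Gᶜ]) X (hmemcond _ hpos0ng.ne') μngO
  have e3 := sq_int_eq_var_add (μ[|O ⁻¹' {0} ∩ G]) X (hmemcond _ hpos0g.ne') μO
  have e4 := sq_int_eq_var_add (μ[|O ⁻¹' {0} ∩ Gᶜ]) X (hmemcond _ hpos0ng.ne') μO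
  subst hBgGroup hBngGroup hBgPop hBngPop hΔGroup hΔPop hLgGroup hLngGroup hLgPop hLngPop
  rw [e1, e2, e3, e4, hvar]
  constructor <;> intro h <;> nlinarith [h]
end

section
/- Gap comparison in terms of the missingness process (part of the proof of Theorem 3): under the assumptions Var(X | {O=0} ∩ G) = Var(X | {O=0} ∩ Gᶜ) and μ_g^O > μ^O, the inequality Δ^{group}_g > Δ^{pop}_g holds if and only if F > R_F, i.e. ρ_g·σ_{X|G}·f(α_g, r_g, α_{¬g}) + ρ_{¬g}·σ_{X|Gᶜ}·f(α_{¬g}, 1−r_g, α_g) > ((1−r_g)·α_{¬g} − r_g·α_g)·(μ_g − μ_{¬g}). -/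
open MeasureTheory ProbabilityTheory

set_option maxHeartbeats 2000000 in
private lemma key_alg (a b c d IA IB IC ID JB JD rg αg αng μg μng μgO μngO μO LgG LngG LgP LngP F RF : ℝ)
    (ha : a ≠ 0) (hb : b ≠ 0) (hc : c ≠ 0) (hd : d ≠ 0)
    (hab : a + b ≠ 0) (hcd : c + d ≠ 0) (hac : a + c ≠ 0)
    (hsum : a + b + c + d = 1)
    (hrg : rg = a + b) (hαg : αg = a/(a+b)) (hαng : αng = c/(c+d))
    (hμg : μg = (IA+IB)/(a+b)) (hμng : μng = (IC+ID)/(c+d))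
    (hμgO : μgO = IA/a) (hμngO : μngO = IC/c) (hμO : μO = (IA+IC)/(a+c))
    (hLgG : LgG = b⁻¹*(μgO^2*b - 2*μgO*IB + JB))
    (hLngG : LngG = d⁻¹*(μngO^2*d - 2*μngO*ID + JD))
    (hLgP : LgP = b⁻¹*(μO^2*b - 2*μO*IB + JB))
    (hLngP : LngP = d⁻¹*(μO^2*d - 2*μO*ID + JD))
    (hF : F = (IA/a - IB/b)*(2*αng*(1-rg) - (1-αg)*(αng*(1-rg) - αg*rg))
        + (IC/c - ID/d)*(2*αg*(1-(1-rg)) - (1-αng)*(αg*(1-(1-rg)) - αng*(1-rg))))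
    (hRF : RF = ((1-rg)*αng - rg*αg)*(μg - μng)) :
    ((LgG - LngG) - (LgP - LngP)) * ((1-rg)*αng) = (μgO - μO) * (F - RF) := by
  subst hrg hαg hαng hμg hμng hμgO hμngO hμO hLgG hLngG hLgP hLngP hF hRF
  have e1 : (1:ℝ) - (a+b) = c + d := by linarith
  rw [e1]
  have e2 : (1:ℝ) - (c+d) = a + b := by linarith
  rw [e2]
  field_simp
  ring

private lemma cov_div_lemma (Cov a b IA IB αg μg : ℝ)
    (ha : a ≠ 0) (hb : b ≠ 0) (hab : a + b ≠ 0)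
    (hαg : αg = a/(a+b)) (hμg : μg = (IA+IB)/(a+b))
    (hCov : Cov = (a+b)⁻¹ * (IA - αg*(IA+IB) - μg*a + (a+b)*(αg*μg))) :
    Cov / (αg*(1-αg)) = IA/a - IB/b := by
  subst hαg hμg hCov
  have e1 : (1:ℝ) - a/(a+b) = b/(a+b) := by field_simp; ring
  rw [e1]
  field_simp
  ring

private lemma sqrt_div_lemma (a : ℝ) (h0 : 0 < a) (h1 : a < 1) :
    Real.sqrt ((1-a)/a) = (1-a)/Real.sqrt (a*(1-a)) := by
  have h1a : (0:ℝ) ≤ 1 - a := by linarith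
  rw [Real.sqrt_div h1a, Real.sqrt_mul h0.le]
  rw [div_eq_div_iff (Real.sqrt_pos.2 h0).ne'
    (mul_pos (Real.sqrt_pos.2 h0) (Real.sqrt_pos.2 (by linarith : (0:ℝ) < 1 - a))).ne']
  linear_combination Real.sqrt a * Real.sq_sqrt h1a

set_option maxHeartbeats 4000000 in
/-- (Part of the proof of Theorem 3.) Under equal unobserved-data variances
and `μ_g^O > μ^O`, the inequality `Δ^group_g > Δ^pop_g` holds iff `F > R_F`. -/
theorem gap_comparison_missingness
    {Ω : Type*} [MeasurableSpace Ω] (μ : Measure Ω) [IsProbabilityMeasure μ]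
    (X O : Ω → ℝ) (G : Set Ω)
    (hXm : Measurable X) (hOm : Measurable O) (hG : MeasurableSet G)
    (hX2 : MemLp X 2 μ)
    (hO01 : ∀ ω, O ω = 0 ∨ O ω = 1)
    (αg αng μg μng μgO μngO μO σXG σXnG ρg ρng rg
      LgGroup LngGroup LgPop LngPop ΔGroup ΔPop F RF : ℝ)
    (f : ℝ → ℝ → ℝ → ℝ)
    (hαg : αg = ∫ ω, O ω ∂(μ[|G]))
    (hαng : αng = ∫ ω, O ω ∂(μ[|Gᶜ]))
    (hμg : μg = ∫ ω, X ω ∂(μ[|G]))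
    (hμng : μng = ∫ ω, X ω ∂(μ[|Gᶜ]))
    (hμgO : μgO = ∫ ω, X ω ∂(μ[|O ⁻¹' {1} ∩ G]))
    (hμngO : μngO = ∫ ω, X ω ∂(μ[|O ⁻¹' {1} ∩ Gᶜ]))
    (hμO : μO = ∫ ω, X ω ∂(μ[|O ⁻¹' {1}]))
    (hσXG : σXG = Real.sqrt (variance X (μ[|G])))
    (hσXnG : σXnG = Real.sqrt (variance X (μ[|Gᶜ])))
    (hρg : ρg = condCov (μ[|G]) O X / (Real.sqrt (αg * (1 - αg)) * σXG))
    (hρng : ρng = condCov (μ[|Gᶜ]) O X / (Real.sqrt (αng * (1 - αng)) * σXnG))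
    (hrg : rg = (μ G).toReal)
    (hLgGroup : LgGroup = ∫ ω, (μgO - X ω) ^ 2 ∂(μ[|O ⁻¹' {0} ∩ G]))
    (hLngGroup : LngGroup = ∫ ω, (μngO - X ω) ^ 2 ∂(μ[|O ⁻¹' {0} ∩ Gᶜ]))
    (hLgPop : LgPop = ∫ ω, (μO - X ω) ^ 2 ∂(μ[|O ⁻¹' {0} ∩ G]))
    (hLngPop : LngPop = ∫ ω, (μO - X ω) ^ 2 ∂(μ[|O ⁻¹' {0} ∩ Gᶜ]))
    (hΔGroup : ΔGroup = LgGroup - LngGroup)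
    (hΔPop : ΔPop = LgPop - LngPop)
    (hf : ∀ a r b, f a r b =
      2 * b * (1 - r) / Real.sqrt (a * (1 - a)) -
        Real.sqrt ((1 - a) / a) * (b * (1 - r) - a * r))
    (hF : F = ρg * σXG * f αg rg αng + ρng * σXnG * f αng (1 - rg) αg)
    (hRF : RF = ((1 - rg) * αng - rg * αg) * (μg - μng))
    (hr0 : 0 < rg) (hr1 : rg < 1)
    (hαg0 : 0 < αg) (hαg1 : αg < 1)
    (hαng0 : 0 < αng) (hαng1 : αng < 1)
    (hσpos : 0 < σXG) (hσnpos : 0 < σXnG)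
    (hpos1g : 0 < μ (O ⁻¹' {1} ∩ G)) (hpos0g : 0 < μ (O ⁻¹' {0} ∩ G))
    (hpos1ng : 0 < μ (O ⁻¹' {1} ∩ Gᶜ)) (hpos0ng : 0 < μ (O ⁻¹' {0} ∩ Gᶜ))
    (hvar : variance X (μ[|O ⁻¹' {0} ∩ G]) = variance X (μ[|O ⁻¹' {0} ∩ Gᶜ]))
    (hmean : μgO > μO) :
    ΔGroup > ΔPop ↔ F > RF := by
  have hcond : ∀ (S : Set Ω) (g : Ω → ℝ),
      ∫ x, g x ∂(μ[|S]) = (μ S).toReal⁻¹ * ∫ x in S, g x ∂μ := by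
    intro S g
    rw [ProbabilityTheory.cond, integral_smul_measure, ENNReal.toReal_inv, smul_eq_mul]
  have hO1 : MeasurableSet (O ⁻¹' {1}) := hOm (measurableSet_singleton 1)
  have hO0 : MeasurableSet (O ⁻¹' {0}) := hOm (measurableSet_singleton 0)
  have hGc : MeasurableSet Gᶜ := hG.compl
  have hdisj : Disjoint (O ⁻¹' {1}) (O ⁻¹' {0}) := by
    rw [Set.disjoint_left]
    intro ω h1 h0
    simp only [Set.mem_preimage, Set.mem_singleton_iff] at h1 h0
    rw [h0] at h1; norm_num at h1
  have hunion : O ⁻¹' {1} ∪ O ⁻¹' {0} = Set.univ := by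
    ext ω
    simp only [Set.mem_union, Set.mem_preimage, Set.mem_singleton_iff, Set.mem_univ, iff_true]
    rcases hO01 ω with h | h
    · exact Or.inr h
    · exact Or.inl h
  have hXint : Integrable X μ := hX2.integrable one_le_two
  have hX2int : Integrable (fun ω => X ω ^ 2) μ := hX2.integrable_sq
  have hOint : Integrable O μ := by
    refine (integrable_const (1:ℝ)).mono hOm.aestronglyMeasurable
      (Filter.Eventually.of_forall ?_)
    intro ω; rcases hO01 ω with h | h <;> simp [h]
  have hOXint : Integrable (fun ω => O ω * X ω) μ := by
    refine hXint.mono (hOm.mul hXm).aestronglyMeasurable (Filter.Eventually.of_forall ?_)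
    intro ω
    rcases hO01 ω with h | h <;> simp [h]
  have hsplitM : ∀ (S : Set Ω), MeasurableSet S →
      μ S = μ (O ⁻¹' {1} ∩ S) + μ (O ⁻¹' {0} ∩ S) := by
    intro S hS
    have hu : (O ⁻¹' {1} ∩ S) ∪ (O ⁻¹' {0} ∩ S) = S := by
      rw [← Set.union_inter_distrib_right, hunion, Set.univ_inter]
    have h2 : μ ((O ⁻¹' {1} ∩ S) ∪ (O ⁻¹' {0} ∩ S)) = μ (O ⁻¹' {1} ∩ S) + μ (O ⁻¹' {0} ∩ S) :=
      measure_union (hdisj.mono Set.inter_subset_left Set.inter_subset_left) (hO0.inter hS)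
    rw [hu] at h2
    exact h2
  have hsplitI : ∀ (S : Set Ω), MeasurableSet S → ∀ g : Ω → ℝ, Integrable g μ →
      ∫ x in S, g x ∂μ = (∫ x in O ⁻¹' {1} ∩ S, g x ∂μ) + ∫ x in O ⁻¹' {0} ∩ S, g x ∂μ := by
    intro S hS g hg
    have hu : (O ⁻¹' {1} ∩ S) ∪ (O ⁻¹' {0} ∩ S) = S := by
      rw [← Set.union_inter_distrib_right, hunion, Set.univ_inter]
    have h2 : ∫ x in (O ⁻¹' {1} ∩ S) ∪ (O ⁻¹' {0} ∩ S), g x ∂μ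
        = (∫ x in O ⁻¹' {1} ∩ S, g x ∂μ) + ∫ x in O ⁻¹' {0} ∩ S, g x ∂μ :=
      setIntegral_union (hdisj.mono Set.inter_subset_left Set.inter_subset_left)
        (hO0.inter hS) (hg.integrableOn) (hg.integrableOn)
    rw [hu] at h2
    exact h2
  have hO_on1 : ∀ (S : Set Ω), MeasurableSet S →
      ∫ x in O ⁻¹' {1} ∩ S, O x ∂μ = (μ (O ⁻¹' {1} ∩ S)).toReal := by
    intro S hS
    rw [setIntegral_congr_fun (hO1.inter hS) (g := fun _ => (1:ℝ)) (fun x hx => hx.1)]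
    simp; rfl
  have hO_on0 : ∀ (S : Set Ω), MeasurableSet S →
      ∫ x in O ⁻¹' {0} ∩ S, O x ∂μ = 0 := by
    intro S hS
    rw [setIntegral_congr_fun (hO0.inter hS) (g := fun _ => (0:ℝ)) (fun x hx => hx.1)]
    simp
  have hOX_on1 : ∀ (S : Set Ω), MeasurableSet S →
      ∫ x in O ⁻¹' {1} ∩ S, O x * X x ∂μ = ∫ x in O ⁻¹' {1} ∩ S, X x ∂μ := by
    intro S hS
    exact setIntegral_congr_fun (hO1.inter hS) (g := X)
      (fun x hx => by show O x * X x = X x; rw [show O x = 1 from hx.1, one_mul])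
  have hOX_on0 : ∀ (S : Set Ω), MeasurableSet S →
      ∫ x in O ⁻¹' {0} ∩ S, O x * X x ∂μ = 0 := by
    intro S hS
    rw [setIntegral_congr_fun (hO0.inter hS) (g := fun _ => (0:ℝ))
      (fun x hx => by show O x * X x = 0; rw [show O x = 0 from hx.1, zero_mul])]
    simp
  have hcovexp : ∀ (S : Set Ω), MeasurableSet S → ∀ p q : ℝ,
      (∫ x in S, (O x - p) * (X x - q) ∂μ)
      = (∫ x in S, O x * X x ∂μ) - p * (∫ x in S, X x ∂μ)
        - q * (∫ x in S, O x ∂μ) + (μ S).toReal * (p * q) := by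
    intro S hS p q
    have i1 : Integrable (fun x => O x * X x - p * X x) (μ.restrict S) :=
      (hOXint.integrableOn).sub ((hXint.integrableOn).const_mul p)
    have i2 : Integrable (fun x => O x * X x - p * X x - q * O x) (μ.restrict S) :=
      i1.sub ((hOint.integrableOn).const_mul q)
    have e0 : ∫ x in S, (O x - p) * (X x - q) ∂μ
        = ∫ x in S, (O x * X x - p * X x - q * O x + p * q) ∂μ :=
      setIntegral_congr_fun hS (fun x _ => by ring)
    have e1 : ∫ x in S, (O x * X x - p * X x - q * O x + p * q) ∂μ
        = (∫ x in S, (O x * X x - p * X x - q * O x) ∂μ) + ∫ x in S, (fun _ => p * q) x ∂μ :=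
      integral_add i2 (integrable_const _)
    have e2 : ∫ x in S, (O x * X x - p * X x - q * O x) ∂μ
        = (∫ x in S, (O x * X x - p * X x) ∂μ) - ∫ x in S, q * O x ∂μ :=
      integral_sub i1 ((hOint.integrableOn).const_mul q)
    have e3 : ∫ x in S, (O x * X x - p * X x) ∂μ
        = (∫ x in S, O x * X x ∂μ) - ∫ x in S, p * X x ∂μ :=
      integral_sub hOXint.integrableOn ((hXint.integrableOn).const_mul p)
    rw [e0, e1, e2, e3, integral_const_mul, integral_const_mul, setIntegral_const,
      smul_eq_mul, measureReal_def]
  have hLexp : ∀ (S : Set Ω), MeasurableSet S → ∀ t : ℝ,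
      ∫ x in S, (t - X x) ^ 2 ∂μ
        = t ^ 2 * (μ S).toReal - 2 * t * (∫ x in S, X x ∂μ) + ∫ x in S, X x ^ 2 ∂μ := by
    intro S hS t
    have i1 : Integrable (fun x => t ^ 2 - 2 * t * X x) (μ.restrict S) :=
      (integrable_const _).sub ((hXint.integrableOn).const_mul (2*t))
    have e0 : ∫ x in S, (t - X x) ^ 2 ∂μ
        = ∫ x in S, (t ^ 2 - 2 * t * X x + X x ^ 2) ∂μ :=
      setIntegral_congr_fun hS (fun x _ => by ring)
    have e1 : ∫ x in S, (t ^ 2 - 2 * t * X x + X x ^ 2) ∂μ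
        = (∫ x in S, (t ^ 2 - 2 * t * X x) ∂μ) + ∫ x in S, X x ^ 2 ∂μ :=
      integral_add i1 hX2int.integrableOn
    have e2 : ∫ x in S, (t ^ 2 - 2 * t * X x) ∂μ
        = (∫ x in S, (fun _ => t ^ 2) x ∂μ) - ∫ x in S, 2 * t * X x ∂μ :=
      integral_sub (integrable_const _) ((hXint.integrableOn).const_mul (2*t))
    rw [e0, e1, e2, integral_const_mul, setIntegral_const, smul_eq_mul, measureReal_def, mul_comm]
  -- abbreviations (primitive reals)
  set a : ℝ := (μ (O ⁻¹' {1} ∩ G)).toReal with ha_def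
  set b : ℝ := (μ (O ⁻¹' {0} ∩ G)).toReal with hb_def
  set c : ℝ := (μ (O ⁻¹' {1} ∩ Gᶜ)).toReal with hc_def
  set d : ℝ := (μ (O ⁻¹' {0} ∩ Gᶜ)).toReal with hd_def
  set IA : ℝ := ∫ x in O ⁻¹' {1} ∩ G, X x ∂μ with hIA_def
  set IB : ℝ := ∫ x in O ⁻¹' {0} ∩ G, X x ∂μ with hIB_def
  set IC : ℝ := ∫ x in O ⁻¹' {1} ∩ Gᶜ, X x ∂μ with hIC_def
  set ID : ℝ := ∫ x in O ⁻¹' {0} ∩ Gᶜ, X x ∂μ with hID_def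
  set JB : ℝ := ∫ x in O ⁻¹' {0} ∩ G, X x ^ 2 ∂μ with hJB_def
  set JD : ℝ := ∫ x in O ⁻¹' {0} ∩ Gᶜ, X x ^ 2 ∂μ with hJD_def
  have hapos : 0 < a := ENNReal.toReal_pos hpos1g.ne' (measure_ne_top μ _)
  have hbpos : 0 < b := ENNReal.toReal_pos hpos0g.ne' (measure_ne_top μ _)
  have hcpos : 0 < c := ENNReal.toReal_pos hpos1ng.ne' (measure_ne_top μ _)
  have hdpos : 0 < d := ENNReal.toReal_pos hpos0ng.ne' (measure_ne_top μ _)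
  have hG1 : (μ G).toReal = a + b := by
    rw [hsplitM G hG, ENNReal.toReal_add (measure_ne_top μ _) (measure_ne_top μ _)]
  have hG2 : (μ Gᶜ).toReal = c + d := by
    rw [hsplitM Gᶜ hGc, ENNReal.toReal_add (measure_ne_top μ _) (measure_ne_top μ _)]
  have htot : (μ G).toReal + (μ Gᶜ).toReal = 1 := by
    rw [← ENNReal.toReal_add (measure_ne_top μ _) (measure_ne_top μ _),
      measure_add_measure_compl hG, measure_univ, ENNReal.toReal_one]
  have hsum : a + b + c + d = 1 := by
    rw [hG1] at htot; rw [hG2] at htot; linarith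
  -- O⁻¹{1} splits over G, Gᶜ
  have hO1u : (O ⁻¹' {1} ∩ G) ∪ (O ⁻¹' {1} ∩ Gᶜ) = O ⁻¹' {1} := Set.inter_union_compl _ _
  have hdGGc : Disjoint (O ⁻¹' {1} ∩ G) (O ⁻¹' {1} ∩ Gᶜ) :=
    disjoint_compl_right.mono Set.inter_subset_right Set.inter_subset_right
  have hmO1 : (μ (O ⁻¹' {1})).toReal = a + c := by
    have h2 : μ ((O ⁻¹' {1} ∩ G) ∪ (O ⁻¹' {1} ∩ Gᶜ)) = μ (O ⁻¹' {1} ∩ G) + μ (O ⁻¹' {1} ∩ Gᶜ) :=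
      measure_union hdGGc (hO1.inter hGc)
    rw [hO1u] at h2
    rw [h2, ENNReal.toReal_add (measure_ne_top μ _) (measure_ne_top μ _)]
  have hIO1 : ∫ x in O ⁻¹' {1}, X x ∂μ = IA + IC := by
    have h2 : ∫ x in (O ⁻¹' {1} ∩ G) ∪ (O ⁻¹' {1} ∩ Gᶜ), X x ∂μ
        = (∫ x in O ⁻¹' {1} ∩ G, X x ∂μ) + ∫ x in O ⁻¹' {1} ∩ Gᶜ, X x ∂μ :=
      setIntegral_union hdGGc (hO1.inter hGc) hXint.integrableOn hXint.integrableOn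
    rw [hO1u] at h2
    exact h2
  -- quantity formulas
  have hαg2 : αg = a / (a + b) := by
    rw [hαg, hcond, hsplitI G hG O hOint, hO_on1 G hG, hO_on0 G hG, add_zero, hG1, ← ha_def]
    ring
  have hαng2 : αng = c / (c + d) := by
    rw [hαng, hcond, hsplitI Gᶜ hGc O hOint, hO_on1 Gᶜ hGc, hO_on0 Gᶜ hGc, add_zero, hG2,
      ← hc_def]
    ring
  have hμg2 : μg = (IA + IB) / (a + b) := by
    rw [hμg, hcond, hsplitI G hG X hXint, hG1]
    ring
  have hμng2 : μng = (IC + ID) / (c + d) := by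
    rw [hμng, hcond, hsplitI Gᶜ hGc X hXint, hG2]
    ring
  have hμgO2 : μgO = IA / a := by
    rw [hμgO, hcond]
    ring
  have hμngO2 : μngO = IC / c := by
    rw [hμngO, hcond]
    ring
  have hμO2 : μO = (IA + IC) / (a + c) := by
    rw [hμO, hcond, hIO1, hmO1]
    ring
  have hrg2 : rg = a + b := by rw [hrg, hG1]
  -- covariance values
  have hcovG : condCov (μ[|G]) O X
      = (a + b)⁻¹ * (IA - αg*(IA+IB) - μg*a + (a+b)*(αg*μg)) := by
    unfold condCov
    rw [← hαg, ← hμg, hcond, hcovexp G hG αg μg, hsplitI G hG (fun ω => O ω * X ω) hOXint,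
      hOX_on1 G hG, hOX_on0 G hG, add_zero, hsplitI G hG X hXint,
      hsplitI G hG O hOint, hO_on1 G hG, hO_on0 G hG, add_zero, hG1, ← ha_def,
      ← hIA_def, ← hIB_def]
  have hcovGc : condCov (μ[|Gᶜ]) O X
      = (c + d)⁻¹ * (IC - αng*(IC+ID) - μng*c + (c+d)*(αng*μng)) := by
    unfold condCov
    rw [← hαng, ← hμng, hcond, hcovexp Gᶜ hGc αng μng,
      hsplitI Gᶜ hGc (fun ω => O ω * X ω) hOXint,
      hOX_on1 Gᶜ hGc, hOX_on0 Gᶜ hGc, add_zero, hsplitI Gᶜ hGc X hXint,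
      hsplitI Gᶜ hGc O hOint, hO_on1 Gᶜ hGc, hO_on0 Gᶜ hGc, add_zero, hG2, ← hc_def,
      ← hIC_def, ← hID_def]
  have hcg : condCov (μ[|G]) O X / (αg*(1-αg)) = IA/a - IB/b :=
    cov_div_lemma _ a b IA IB αg μg hapos.ne' hbpos.ne' (by positivity) hαg2 hμg2 hcovG
  have hcng : condCov (μ[|Gᶜ]) O X / (αng*(1-αng)) = IC/c - ID/d :=
    cov_div_lemma _ c d IC ID αng μng hcpos.ne' hdpos.ne' (by positivity) hαng2 hμng2 hcovGc
  -- F in primitive form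
  have hg01 : 0 < αg * (1 - αg) := mul_pos hαg0 (by linarith : (0:ℝ) < 1 - αg)
  have hng01 : 0 < αng * (1 - αng) := mul_pos hαng0 (by linarith : (0:ℝ) < 1 - αng)
  have hsgpos : 0 < Real.sqrt (αg*(1-αg)) := Real.sqrt_pos.2 hg01
  have hsngpos : 0 < Real.sqrt (αng*(1-αng)) := Real.sqrt_pos.2 hng01
  have hsqg : Real.sqrt (αg*(1-αg)) ^ 2 = αg*(1-αg) := Real.sq_sqrt hg01.le
  have hsqng : Real.sqrt (αng*(1-αng)) ^ 2 = αng*(1-αng) := Real.sq_sqrt hng01.le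
  have e1g : ρg * σXG = condCov (μ[|G]) O X / Real.sqrt (αg*(1-αg)) := by
    rw [hρg, ← div_div, div_mul_cancel₀ _ hσpos.ne']
  have e1ng : ρng * σXnG = condCov (μ[|Gᶜ]) O X / Real.sqrt (αng*(1-αng)) := by
    rw [hρng, ← div_div, div_mul_cancel₀ _ hσnpos.ne']
  have hFg : ρg * σXG * f αg rg αng
      = (condCov (μ[|G]) O X / (αg*(1-αg)))
        * (2*αng*(1-rg) - (1-αg)*(αng*(1-rg) - αg*rg)) := by
    rw [hf, sqrt_div_lemma αg hαg0 hαg1, e1g]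
    set s : ℝ := Real.sqrt (αg*(1-αg)) with hsdef
    have hs : s * s = αg*(1-αg) := Real.mul_self_sqrt hg01.le
    rw [← hs]
    ring
  have hFng : ρng * σXnG * f αng (1-rg) αg
      = (condCov (μ[|Gᶜ]) O X / (αng*(1-αng)))
        * (2*αg*(1-(1-rg)) - (1-αng)*(αg*(1-(1-rg)) - αng*(1-rg))) := by
    rw [hf, sqrt_div_lemma αng hαng0 hαng1, e1ng]
    set s : ℝ := Real.sqrt (αng*(1-αng)) with hsdef
    have hs : s * s = αng*(1-αng) := Real.mul_self_sqrt hng01.le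
    rw [← hs]
    ring
  have hF2 : F = (IA/a - IB/b)*(2*αng*(1-rg) - (1-αg)*(αng*(1-rg) - αg*rg))
      + (IC/c - ID/d)*(2*αg*(1-(1-rg)) - (1-αng)*(αg*(1-(1-rg)) - αng*(1-rg))) := by
    rw [hF, hFg, hFng, hcg, hcng]
  -- L values
  have hLgG2 : LgGroup = b⁻¹*(μgO^2*b - 2*μgO*IB + JB) := by
    rw [hLgGroup, hcond, hLexp _ (hO0.inter hG) μgO]
  have hLngG2 : LngGroup = d⁻¹*(μngO^2*d - 2*μngO*ID + JD) := by
    rw [hLngGroup, hcond, hLexp _ (hO0.inter hGc) μngO]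
  have hLgP2 : LgPop = b⁻¹*(μO^2*b - 2*μO*IB + JB) := by
    rw [hLgPop, hcond, hLexp _ (hO0.inter hG) μO]
  have hLngP2 : LngPop = d⁻¹*(μO^2*d - 2*μO*ID + JD) := by
    rw [hLngPop, hcond, hLexp _ (hO0.inter hGc) μO]
  -- key identity
  have key : ((LgGroup - LngGroup) - (LgPop - LngPop)) * ((1-rg)*αng)
      = (μgO - μO) * (F - RF) :=
    key_alg a b c d IA IB IC ID JB JD rg αg αng μg μng μgO μngO μO
      LgGroup LngGroup LgPop LngPop F RF
      hapos.ne' hbpos.ne' hcpos.ne' hdpos.ne'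
      (by positivity) (by positivity) (by positivity) hsum
      hrg2 hαg2 hαng2 hμg2 hμng2 hμgO2 hμngO2 hμO2
      hLgG2 hLngG2 hLgP2 hLngP2 hF2 hRF
  have hδ : 0 < μgO - μO := sub_pos.2 hmean
  have hw : 0 < (1 - rg) * αng := mul_pos (by linarith) hαng0
  rw [hΔGroup, hΔPop]
  constructor
  · intro h
    have h1 : 0 < ((LgGroup - LngGroup) - (LgPop - LngPop)) * ((1-rg)*αng) :=
      mul_pos (sub_pos.2 h) hw
    rw [key] at h1
    rcases mul_pos_iff.mp h1 with ⟨_, h2⟩ | ⟨h2, _⟩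
    · linarith
    · linarith
  · intro h
    have h1 : 0 < (μgO - μO) * (F - RF) := mul_pos hδ (sub_pos.2 h)
    rw [← key] at h1
    rcases mul_pos_iff.mp h1 with ⟨h2, _⟩ | ⟨_, h2⟩
    · linarith
    · linarith
end
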